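/- For every density matrix σ on ℂ² ⊗ ℂ², with x_{jk} = ⟨φʲ, σ φᵏ⟩, one has (1/6)·Tr((σ ⊗ σ)·(L₃⁺ + L₃⁻)) − (1/9)·Tr((σ ⊗ σ)·(K₅⁺ + K₁⁺ + K₃⁻)) = (1/3)·(x₀₀ − (x₁₁+x₂₂+x₃₃)/3)·(x₁₁+x₂₂+x₃₃); consequently, if x₀₀ = ⟨φ⁰, σ φ⁰⟩ ≥ 1/4 then (1/9)·Tr((σ ⊗ σ)·(K₅⁺ + K₁⁺ + K₃⁻)) ≤ (1/6)·Tr((σ ⊗ σ)·(L₃⁺ + L₃⁻)). -/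

import Mathlib

open Matrix
open scoped Matrix Kronecker ComplexOrder

noncomputable section

/-- Index type of `ℂ² ⊗ ℂ²`. -/
abbrev Q : Type := Fin 2 × Fin 2

/-- The standard basis vector `|ab⟩` of `ℂ² ⊗ ℂ²`. -/
def ket (a b : Fin 2) : Q → ℂ := fun p => if p = (a, b) then 1 else 0

/-- The Bell basis `φ⁰, φ¹, φ², φ³` of `ℂ² ⊗ ℂ²`. -/
def bell : Fin 4 → Q → ℂ
  | 0 => fun p => (ket 0 0 p + ket 1 1 p) / (Real.sqrt 2 : ℂ)
  | 1 => fun p => Complex.I * (ket 0 1 p + ket 1 0 p) / (Real.sqrt 2 : ℂ)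
  | 2 => fun p => (-ket 0 1 p + ket 1 0 p) / (Real.sqrt 2 : ℂ)
  | 3 => fun p => Complex.I * (ket 0 0 p - ket 1 1 p) / (Real.sqrt 2 : ℂ)

/-- The product basis `e^{jk} = φʲ ⊗ φᵏ` of `(ℂ²⊗ℂ²)⊗(ℂ²⊗ℂ²)`. -/
def e (j k : Fin 4) : Q × Q → ℂ := fun pq => bell j pq.1 * bell k pq.2

/-- Rank-one operator `|v⟩⟨v|`. -/
def outer {m : Type*} (v : m → ℂ) : Matrix m m ℂ := vecMulVec v (star v)

/-- Orthogonal projection onto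
`span{e^{jk}+e^{kj} : 1≤j<k≤3} ∪ {e^{11}−e^{22}, e^{22}−e^{33}}`. -/
def K5 : Matrix (Q × Q) (Q × Q) ℂ :=
  (1 / 2 : ℂ) • (outer (e 1 2 + e 2 1) + outer (e 2 3 + e 3 2) + outer (e 3 1 + e 1 3)) +
    (1 / 2 : ℂ) • outer (e 1 1 - e 2 2) +
    (1 / 6 : ℂ) • outer (e 1 1 + e 2 2 - (2 : ℂ) • e 3 3)

/-- Orthogonal projection onto `span{e^{11}+e^{22}+e^{33}}`. -/
def K1 : Matrix (Q × Q) (Q × Q) ℂ :=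
  (1 / 3 : ℂ) • outer (e 1 1 + e 2 2 + e 3 3)

/-- Orthogonal projection onto `span{e^{jk}−e^{kj} : 1≤j<k≤3}`. -/
def K3m : Matrix (Q × Q) (Q × Q) ℂ :=
  (1 / 2 : ℂ) • (outer (e 1 2 - e 2 1) + outer (e 2 3 - e 3 2) + outer (e 3 1 - e 1 3))

/-- Orthogonal projection onto `span{e^{00}}`. -/
def L1 : Matrix (Q × Q) (Q × Q) ℂ := outer (e 0 0)

/-- Orthogonal projection onto `span{e^{0j}+e^{j0} : j=1,2,3}`. -/
def L3p : Matrix (Q × Q) (Q × Q) ℂ :=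
  (1 / 2 : ℂ) • (outer (e 0 1 + e 1 0) + outer (e 0 2 + e 2 0) + outer (e 0 3 + e 3 0))

/-- Orthogonal projection onto `span{e^{0j}−e^{j0} : j=1,2,3}`. -/
def L3m : Matrix (Q × Q) (Q × Q) ℂ :=
  (1 / 2 : ℂ) • (outer (e 0 1 - e 1 0) + outer (e 0 2 - e 2 0) + outer (e 0 3 - e 3 0))

/-- The matrix elements `x_{jk} = ⟨φʲ, σ φᵏ⟩` of a state `σ` in the Bell basis. -/
def x (σ : Matrix Q Q ℂ) (j k : Fin 4) : ℂ := star (bell j) ⬝ᵥ σ.mulVec (bell k)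


lemma trace_mul_outer {n : Type*} [Fintype n] [DecidableEq n] (M : Matrix n n ℂ) (v : n → ℂ) :
    (M * outer v).trace = star v ⬝ᵥ M.mulVec v := by
  simp only [trace, Matrix.mul_apply, outer, vecMulVec_apply, mulVec, dotProduct, diag_apply,
    Pi.star_apply, Finset.mul_sum]
  exact Finset.sum_congr rfl fun i _ => Finset.sum_congr rfl fun j _ => by ring

lemma dot_e (σ : Matrix Q Q ℂ) (j k j' k' : Fin 4) :
    star (e j k) ⬝ᵥ (σ ⊗ₖ σ).mulVec (e j' k') = x σ j j' * x σ k k' := by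
  simp only [e, x, dotProduct, mulVec, kroneckerMap_apply, Fintype.sum_prod_type,
    Pi.star_apply, star_mul', Finset.mul_sum, Finset.sum_mul, Fin.sum_univ_two]
  ring

lemma bell_trace (σ : Matrix Q Q ℂ) :
    x σ 0 0 + x σ 1 1 + x σ 2 2 + x σ 3 3 = σ.trace := by
  have h2 : ((Real.sqrt 2 : ℝ) : ℂ) ^ 2 = 2 := by
    rw [← Complex.ofReal_pow, Real.sq_sqrt (by norm_num)]; norm_num
  have hne : ((Real.sqrt 2 : ℝ) : ℂ) ≠ 0 := by
    intro h
    rw [Complex.ofReal_eq_zero] at h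
    exact (Real.sqrt_pos.mpr (by norm_num : (0:ℝ) < 2)).ne' h
  simp only [x, bell, ket, dotProduct, mulVec, trace, diag_apply, Fintype.sum_prod_type,
    Fin.sum_univ_two, Pi.star_apply, star_div₀, star_add, star_sub, star_mul',
    Complex.star_def, map_add, map_sub, map_neg, _root_.map_one, _root_.map_zero, Complex.conj_I,
    Complex.conj_ofReal]
  norm_num [Prod.ext_iff]
  field_simp
  ring_nf
  simp only [Complex.I_sq]
  have h13 : ((Real.sqrt 2 : ℝ) : ℂ)^13 = 2 * ((Real.sqrt 2 : ℝ) : ℂ)^11 := by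
    rw [show (13:ℕ) = 11 + 2 from rfl, pow_add, h2]; ring
  simp only [h2]; ring

/-- `(1/6) Tr((σ⊗σ)(L₃⁺+L₃⁻)) − (1/9) Tr((σ⊗σ)(K₅⁺+K₁⁺+K₃⁻))
  = (1/3)(x₀₀ − (x₁₁+x₂₂+x₃₃)/3)(x₁₁+x₂₂+x₃₃)`;
consequently if `x₀₀ ≥ 1/4` then
`(1/9) Tr((σ⊗σ)(K₅⁺+K₁⁺+K₃⁻)) ≤ (1/6) Tr((σ⊗σ)(L₃⁺+L₃⁻))`. -/
theorem stmt14 (σ : Matrix Q Q ℂ) (hσ : σ.PosSemidef) (htr : σ.trace = 1) :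
    ((1 / 6 : ℂ) * ((σ ⊗ₖ σ) * (L3p + L3m)).trace -
        (1 / 9 : ℂ) * ((σ ⊗ₖ σ) * (K5 + K1 + K3m)).trace =
      (1 / 3 : ℂ) * (x σ 0 0 - (x σ 1 1 + x σ 2 2 + x σ 3 3) / 3) *
        (x σ 1 1 + x σ 2 2 + x σ 3 3)) ∧
    ((1 / 4 : ℝ) ≤ (x σ 0 0).re →
      (1 / 9 : ℝ) * (((σ ⊗ₖ σ) * (K5 + K1 + K3m)).trace).re ≤
        (1 / 6 : ℝ) * (((σ ⊗ₖ σ) * (L3p + L3m)).trace).re) := by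
  have key : (1 / 6 : ℂ) * ((σ ⊗ₖ σ) * (L3p + L3m)).trace -
        (1 / 9 : ℂ) * ((σ ⊗ₖ σ) * (K5 + K1 + K3m)).trace =
      (1 / 3 : ℂ) * (x σ 0 0 - (x σ 1 1 + x σ 2 2 + x σ 3 3) / 3) *
        (x σ 1 1 + x σ 2 2 + x σ 3 3) := by
    simp only [K5, K1, K3m, L3p, L3m, Matrix.mul_add, Matrix.mul_smul, trace_add, trace_smul,
      trace_mul_outer, smul_eq_mul]
    simp only [star_add, star_sub, star_smul, Matrix.mulVec_add, Matrix.mulVec_sub,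
      Matrix.mulVec_smul, add_dotProduct, sub_dotProduct, smul_dotProduct, dotProduct_add,
      dotProduct_sub, dotProduct_smul, dot_e, smul_eq_mul, Complex.star_def, map_ofNat]
    ring
  refine ⟨key, fun h => ?_⟩
  have himj : ∀ j, (x σ j j).im = 0 := fun j => by
    have h0 : 0 ≤ x σ j j := hσ.dotProduct_mulVec_nonneg (bell j)
    rw [Complex.le_def] at h0
    simpa using h0.2.symm
  have hrej : ∀ j, 0 ≤ (x σ j j).re := fun j => by
    have h0 : 0 ≤ x σ j j := hσ.dotProduct_mulVec_nonneg (bell j)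
    rw [Complex.le_def] at h0
    simpa using h0.1
  have hsum : (x σ 0 0).re + ((x σ 1 1).re + (x σ 2 2).re + (x σ 3 3).re) = 1 := by
    have h1 := congrArg Complex.re (bell_trace σ)
    rw [htr] at h1
    simp [Complex.add_re] at h1; linarith
  have e0 : x σ 0 0 = ((x σ 0 0).re : ℂ) := Complex.ext (by simp) (by simp [himj 0])
  have e1 : x σ 1 1 = ((x σ 1 1).re : ℂ) := Complex.ext (by simp) (by simp [himj 1])
  have e2 : x σ 2 2 = ((x σ 2 2).re : ℂ) := Complex.ext (by simp) (by simp [himj 2])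
  have e3 : x σ 3 3 = ((x σ 3 3).re : ℂ) := Complex.ext (by simp) (by simp [himj 3])
  rw [e0, e1, e2, e3] at key
  have hkey := congrArg Complex.re key
  push_cast at hkey
  simp only [Complex.sub_re, Complex.mul_re, Complex.ofReal_re, Complex.ofReal_im,
    Complex.add_re, Complex.sub_im, Complex.add_im, Complex.mul_im] at hkey
  norm_num at hkey
  nlinarith [hrej 1, hrej 2, hrej 3, hrej 0, hsum, h, hkey]
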